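/- Let n ≥ 6 and let 𝔤 be an n-dimensional non-model complex filiform Lie algebra with associated triple (n−2,n−2,n). Then dim[C²𝔤,C²𝔤] = dim[C²𝔤,C³𝔤] = dim[C³𝔤,C²𝔤] = 1, and [C^k𝔤,C^ℓ𝔤] = 0 for all integers k,ℓ ≥ 2 with (k,ℓ) ∉ {(2,2),(2,3),(3,2)} (equivalently, the Hilbert polynomial of 𝔤 is HP⁰_𝔤 + t²s³ + t³s² + t²s², where HP⁰_𝔤 = (n−2)ts + Σ_{2≤k≤n−2}(n−k−1)(t^k s + t s^k)). -/

import Mathlib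

open Module

variable (L : Type) [LieRing L] [LieAlgebra ℂ L]

/-- `C L k` is the `k`-th term of the lower central series of `L`,
with the convention `C L 1 = L`. -/
def C (k : ℕ) : LieIdeal ℂ L := LieModule.lowerCentralSeries ℂ L L (k - 1)

namespace Fili

variable {L}

lemma lcs_lie (b a : ℕ) :
    ⁅LieModule.lowerCentralSeries ℂ L L a, LieModule.lowerCentralSeries ℂ L L b⁆ ≤
      LieModule.lowerCentralSeries ℂ L L (a + b + 1) := by
  induction b generalizing a with
  | zero =>
    rw [LieSubmodule.lie_comm]
    rw [show LieModule.lowerCentralSeries ℂ L L 0 = (⊤ : LieIdeal ℂ L) from rfl]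
    exact le_of_eq (LieModule.lowerCentralSeries_succ ℂ L L a).symm
  | succ b ih =>
    rw [LieSubmodule.lie_le_iff]
    intro x hx m hm
    rw [LieModule.lowerCentralSeries_succ] at hm
    have hm' : m ∈ Submodule.span ℂ
        {w : L | ∃ y ∈ (⊤ : LieIdeal ℂ L), ∃ z ∈ LieModule.lowerCentralSeries ℂ L L b, ⁅y, z⁆ = w} := by
      rw [← LieSubmodule.lieIdeal_oper_eq_linear_span']
      exact hm
    clear hm
    induction hm' using Submodule.span_induction with
    | mem m hmem =>
      obtain ⟨y, -, z, hz, rfl⟩ := hmem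
      rw [leibniz_lie]
      refine add_mem ?_ ?_
      · have h1 : ⁅x, y⁆ ∈ LieModule.lowerCentralSeries ℂ L L (a + 1) := by
          rw [LieModule.lowerCentralSeries_succ]
          rw [← lie_skew]
          exact neg_mem (LieSubmodule.lie_mem_lie (LieSubmodule.mem_top y) hx)
        have := ih (a + 1) (LieSubmodule.lie_mem_lie h1 hz)
        rwa [show a + 1 + b + 1 = a + (b + 1) + 1 from by omega] at this
      · have h2 : ⁅x, z⁆ ∈ LieModule.lowerCentralSeries ℂ L L (a + b + 1) :=
          ih a (LieSubmodule.lie_mem_lie hx hz)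
        have h3 : ⁅y, ⁅x, z⁆⁆ ∈ LieModule.lowerCentralSeries ℂ L L (a + b + 2) := by
          rw [LieModule.lowerCentralSeries_succ]
          exact LieSubmodule.lie_mem_lie (LieSubmodule.mem_top y) h2
        exact h3
    | zero => simp
    | add m₁ m₂ _ _ h1 h2 => rw [lie_add]; exact add_mem h1 h2
    | smul t m _ hm => rw [lie_smul]; exact Submodule.smul_mem _ t hm

lemma C_anti {a b : ℕ} (h : a ≤ b) : C L b ≤ C L a :=
  LieModule.antitone_lowerCentralSeries ℂ L L (Nat.sub_le_sub_right h 1)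

lemma C_succ {j : ℕ} (hj : 1 ≤ j) : C L (j + 1) = ⁅(⊤ : LieIdeal ℂ L), C L j⁆ := by
  have : j + 1 - 1 = (j - 1) + 1 := by omega
  rw [C, this, LieModule.lowerCentralSeries_succ]
  rfl

lemma C_one : C L 1 = ⊤ := rfl

lemma C_lie {a b : ℕ} (ha : 1 ≤ a) (hb : 1 ≤ b) : ⁅C L a, C L b⁆ ≤ C L (a + b) := by
  have := lcs_lie (L := L) (b - 1) (a - 1)
  have h2 : a - 1 + (b - 1) + 1 = a + b - 1 := by omega
  rw [h2] at this
  exact this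

lemma sup_decomp [FiniteDimensional ℂ L] {P Q : Submodule ℂ L} (hQP : Q ≤ P) {v : L}
    (hv : v ∈ P) (hvQ : v ∉ Q) (hr : finrank ℂ P = finrank ℂ Q + 1) :
    P = Submodule.span ℂ {v} ⊔ Q := by
  have h1 : Submodule.span ℂ {v} ⊔ Q ≤ P :=
    sup_le ((Submodule.span_singleton_le_iff_mem _ _).2 hv) hQP
  have h2 : Q < Submodule.span ℂ {v} ⊔ Q := by
    refine lt_of_le_of_ne le_sup_right fun hEq => hvQ ?_
    rw [hEq]
    exact Submodule.mem_sup_left (Submodule.mem_span_singleton_self v)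
  have h3 := Submodule.finrank_lt_finrank_of_lt h2
  exact (Submodule.eq_of_le_of_finrank_le h1 (by omega)).symm

lemma exists_notMem {S : Submodule ℂ L} (h : S ≠ ⊤) : ∃ v, v ∉ S := by
  by_contra hc
  push_neg at hc
  exact h (Submodule.eq_top_iff'.2 hc)

end Fili


/-- `L` is a filiform Lie algebra of dimension `n`. -/
def IsFiliform (n : ℕ) : Prop :=
  2 ≤ n ∧ FiniteDimensional ℂ L ∧ finrank ℂ L = n ∧
    ∀ k, 2 ≤ k → k ≤ n → finrank ℂ (C L k) = n - k

/-- `e 1, …, e n` is an adapted basis of `L`. -/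
def IsAdaptedBasis (n : ℕ) (e : ℕ → L) : Prop :=
  (∃ b : Basis (Fin n) ℂ L, ∀ i : Fin n, b i = e (i.1 + 1)) ∧
  (∀ h, 3 ≤ h → h ≤ n → ⁅e 1, e h⁆ = e (h - 1)) ∧
  (∀ h, 1 ≤ h → h ≤ n → ⁅e 2, e h⁆ = 0) ∧
  (∀ h, 2 ≤ h → h ≤ n → ⁅e 3, e h⁆ = 0)

/-- `L` is (isomorphic to) the model filiform Lie algebra of dimension `n`,
i.e. it admits a basis whose only nonzero brackets are `⁅e 1, e h⁆ = e (h-1)`. -/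
def IsModel (n : ℕ) : Prop :=
  ∃ e : ℕ → L,
    (∃ b : Basis (Fin n) ℂ L, ∀ i : Fin n, b i = e (i.1 + 1)) ∧
    (∀ h, 3 ≤ h → h ≤ n → ⁅e 1, e h⁆ = e (h - 1)) ∧
    ⁅e 1, e 2⁆ = 0 ∧
    (∀ i j, 2 ≤ i → i < j → j ≤ n → ⁅e i, e j⁆ = 0)

/-- `L` is a non-model filiform Lie algebra with associated triple `(z₁, z₂, n)`. -/
def HasTriple (z₁ z₂ n : ℕ) : Prop :=
  IsFiliform L n ∧ ¬ IsModel L n ∧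
  ∀ e : ℕ → L, IsAdaptedBasis L n e →
    IsLeast {k | 4 ≤ k ∧ ⁅e k, e n⁆ ≠ 0} z₁ ∧
    IsLeast {k | 4 ≤ k ∧ ⁅e k, e (k + 1)⁆ ≠ 0} z₂

/-- `θ_k(L)`: the least `ℓ ≥ 1` with `⁅C^k L, C^ℓ L⁆ = 0`. -/
noncomputable def theta (k : ℕ) : ℕ := sInf {ℓ | 1 ≤ ℓ ∧ ⁅C L k, C L ℓ⁆ = ⊥}

/-- `P h u` is the `h`-th coordinate of `u` in the basis `e 1, …, e n` (and `0` for
`h` outside `{1, …, n}`). -/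
def IsCoords (n : ℕ) (e : ℕ → L) (P : ℕ → L → ℂ) : Prop :=
  (∀ u : L, u = ∑ h ∈ Finset.Icc 1 n, P h u • e h) ∧
  (∀ u : L, ∀ h, h ∉ Finset.Icc 1 n → P h u = 0)

/-- `(α, γ, β)` is a family of parameters associated with `L` (with triple `(z₁, z₂, n)`)
with respect to the adapted basis `e` with coordinate functions `P`. -/
def IsAssocParams (z₁ z₂ n : ℕ) (e : ℕ → L) (P : ℕ → L → ℂ)
    (α γ : ℕ → ℂ) (β : ℕ → ℕ → ℂ) : Prop :=
  (∀ i, i ≤ z₂ - z₁ →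
    ⁅e (z₁ + i), e (z₂ + 1)⁆ = ∑ m ∈ Finset.Icc 1 (i + 1), α m • e (i + 3 - m)) ∧
  (∀ j, 2 ≤ j → j ≤ n - z₂ →
    ⁅e z₁, e (z₂ + j)⁆ =
      α 1 • e (j + 1) + ∑ m ∈ Finset.Icc 1 (j - 1), γ m • e (j + 1 - m)) ∧
  (∀ k ℓ, 2 ≤ ℓ → ℓ ≤ n - z₂ → 1 ≤ k → k < z₂ - z₁ + ℓ →
    ⁅e (z₁ + k), e (z₂ + ℓ)⁆ =
      (∑ h ∈ Finset.Icc 2 (k + ℓ),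
        P h (⁅e (z₁ + k - 1), e (z₂ + ℓ)⁆ + ⁅e (z₁ + k), e (z₂ + ℓ - 1)⁆) • e (h + 1))
      + β k ℓ • e 2)

/-- For a filiform Lie algebra with triple `(n-2, n-2, n)`, `n ≥ 6`:
`dim ⁅C², C²⁆ = dim ⁅C², C³⁆ = dim ⁅C³, C²⁆ = 1` and all other bracket ideals
`⁅C^k, C^ℓ⁆` with `k, ℓ ≥ 2` vanish (this computes the Hilbert polynomial). -/
theorem statement14 (n : ℕ) (hn : 6 ≤ n) (h : HasTriple L (n - 2) (n - 2) n) :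
    finrank ℂ (⁅C L 2, C L 2⁆ : LieIdeal ℂ L) = 1 ∧
    finrank ℂ (⁅C L 2, C L 3⁆ : LieIdeal ℂ L) = 1 ∧
    finrank ℂ (⁅C L 3, C L 2⁆ : LieIdeal ℂ L) = 1 ∧
    (∀ k ℓ, 2 ≤ k → 2 ≤ ℓ →
      ¬(k = 2 ∧ ℓ = 2) → ¬(k = 2 ∧ ℓ = 3) → ¬(k = 3 ∧ ℓ = 2) →
      (⁅C L k, C L ℓ⁆ : LieIdeal ℂ L) = ⊥) := by
  obtain ⟨⟨hn2, hfd, hdimL, hrk⟩, hnm, htrip⟩ := h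
  haveI := hfd
  have hrkS : ∀ k, 2 ≤ k → k ≤ n →
      finrank ℂ (LieSubmodule.toSubmodule (C L k)) = n - k := hrk
  have hKbot : C L n = ⊥ := by
    have h0 : finrank ℂ (LieSubmodule.toSubmodule (C L n)) = 0 := by
      rw [hrkS n (by omega) le_rfl]; omega
    have h1 := Submodule.finrank_eq_zero.mp h0
    rw [← LieSubmodule.toSubmodule_inj, LieSubmodule.bot_toSubmodule]
    exact h1
  have hproper : ∀ j, 2 ≤ j → j + 1 ≤ n → C L (j + 1) < C L j := by
    intro j h2 hj
    refine lt_of_le_of_ne (Fili.C_anti (by omega)) fun hEq => ?_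
    have e1 := hrkS j h2 (by omega)
    have e2 := hrkS (j + 1) (by omega) hj
    rw [hEq] at e2
    omega
  have hC2eq : C L 2 = ⁅(⊤ : LieIdeal ℂ L), (⊤ : LieIdeal ℂ L)⁆ := by
    have := Fili.C_succ (L := L) (j := 1) le_rfl
    rwa [Fili.C_one] at this
  have hC2netop : LieSubmodule.toSubmodule (C L 2) ≠ ⊤ := by
    intro hEq
    have h1 := hrkS 2 le_rfl (by omega)
    rw [hEq, finrank_top, hdimL] at h1
    omega
  -- the subspaces B k
  set adm : L → L →ₗ[ℂ] L := fun c => (LieModule.toEnd ℂ L L : L →ₗ[ℂ] Module.End ℂ L).flip c with hadm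
  have hadm' : ∀ c y : L, adm c y = ⁅y, c⁆ := fun c y => rfl
  set B : ℕ → Submodule ℂ L := fun k =>
    ⨅ c ∈ (LieSubmodule.toSubmodule (C L k) : Set L),
      Submodule.comap (adm c) (LieSubmodule.toSubmodule (C L (k + 2))) with hB
  have hmemB : ∀ k (y : L), y ∈ B k ↔ ∀ c ∈ C L k, ⁅y, c⁆ ∈ C L (k + 2) := by
    intro k y
    rw [hB]
    simp only [Submodule.mem_iInf, Submodule.mem_comap]
    constructor
    · intro hyp c hc
      have := hyp c hc
      rwa [hadm', LieSubmodule.mem_toSubmodule] at this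
    · intro hyp c hc
      rw [hadm', LieSubmodule.mem_toSubmodule]
      exact hyp c hc
  have hBproper : ∀ k, 2 ≤ k → k ≤ n - 2 → B k ≠ ⊤ := by
    intro k h2 hk hEq
    refine (hproper (k + 1) (by omega) (by omega)).not_ge ?_
    rw [Fili.C_succ (by omega : 1 ≤ k), LieSubmodule.lie_le_iff]
    intro y _ c hc
    exact ((hmemB k y).mp (by rw [hEq]; exact Submodule.mem_top)) c hc
  -- choose x avoiding C2 and all B k
  obtain ⟨x, hxC2, hxB⟩ : ∃ x : L, x ∉ LieSubmodule.toSubmodule (C L 2) ∧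
      ∀ k, 2 ≤ k → k ≤ n - 2 → x ∉ B k := by
    set p : Fin (n + 1) → Submodule ℂ L := fun k =>
      if 2 ≤ (k : ℕ) ∧ (k : ℕ) ≤ n - 2 then B k else LieSubmodule.toSubmodule (C L 2)
      with hp
    have hcov : ¬ (⋃ i, ((p i : Set L)) = Set.univ) := by
      intro hEq
      obtain ⟨i, hi⟩ := Subspace.exists_eq_top_of_iUnion_eq_univ hEq
      by_cases hi' : 2 ≤ (i : ℕ) ∧ (i : ℕ) ≤ n - 2
      · exact hBproper i hi'.1 hi'.2 (by rw [hp] at hi; simpa [hi'] using hi)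
      · exact hC2netop (by rw [hp] at hi; simpa [hi'] using hi)
    have hx : ∃ x : L, ∀ i, x ∉ p i := by
      by_contra hcon
      push_neg at hcon
      apply hcov
      ext z
      simp only [Set.mem_iUnion, Set.mem_univ, iff_true]
      obtain ⟨i, hi⟩ := hcon z
      exact ⟨i, hi⟩
    obtain ⟨x, hx⟩ := hx
    refine ⟨x, ?_, ?_⟩
    · have h0 := hx ⟨0, by omega⟩
      rw [hp] at h0
      simpa using h0
    · intro k h2 hk
      have h0 := hx ⟨k, by omega⟩
      rw [hp] at h0
      simpa [h2, hk] using h0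
  -- brackets with C2 land in C3
  have hlie23 : ∀ c ∈ C L 2, ∀ w : L, ⁅w, c⁆ ∈ C L 3 ∧ ⁅c, w⁆ ∈ C L 3 := by
    intro c hcmem w
    have h1 : ⁅w, c⁆ ∈ C L 3 := by
      have := LieSubmodule.lie_mem_lie (LieSubmodule.mem_top w) hcmem
        (I := (⊤ : LieIdeal ℂ L)) (N := C L 2)
      rwa [← Fili.C_succ (by omega : 1 ≤ 2)] at this
    exact ⟨h1, by rw [← lie_skew]; exact neg_mem h1⟩
  -- choose u with ⁅x, u⁆ ∉ C L 3
  obtain ⟨u, hu⟩ : ∃ u : L, ⁅x, u⁆ ∉ C L 3 := by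
    by_contra hcon
    push_neg at hcon
    have hwx : ∀ w : L, ⁅w, x⁆ ∈ C L 3 := by
      intro w
      rw [← lie_skew]
      exact neg_mem (hcon w)
    have hsupne : (LieSubmodule.toSubmodule (C L 2) ⊔ Submodule.span ℂ {x}) ≠ ⊤ := by
      intro hEq
      have h1 := Submodule.finrank_add_le_finrank_add_finrank
        (LieSubmodule.toSubmodule (C L 2)) (Submodule.span ℂ {x})
      have h2 : finrank ℂ (Submodule.span ℂ ({x} : Set L)) ≤ 1 := by
        simpa using finrank_span_le_card ({x} : Set L)
      rw [hEq, finrank_top, hdimL, hrkS 2 le_rfl (by omega)] at h1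
      omega
    obtain ⟨y, hy⟩ := Fili.exists_notMem hsupne
    have heqtop : LieSubmodule.toSubmodule (C L 2) ⊔
        (Submodule.span ℂ {x} ⊔ Submodule.span ℂ {y}) = ⊤ := by
      have hlt1 : LieSubmodule.toSubmodule (C L 2) <
          LieSubmodule.toSubmodule (C L 2) ⊔ Submodule.span ℂ {x} := by
        refine lt_of_le_of_ne le_sup_left fun hEq => hxC2 ?_
        rw [hEq]
        exact Submodule.mem_sup_right (Submodule.mem_span_singleton_self x)
      have hlt2 : LieSubmodule.toSubmodule (C L 2) ⊔ Submodule.span ℂ {x} <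
          (LieSubmodule.toSubmodule (C L 2) ⊔ Submodule.span ℂ {x}) ⊔
            Submodule.span ℂ {y} := by
        refine lt_of_le_of_ne le_sup_left fun hEq => hy ?_
        rw [hEq]
        exact Submodule.mem_sup_right (Submodule.mem_span_singleton_self y)
      have f1 := Submodule.finrank_lt_finrank_of_lt hlt1
      have f2 := Submodule.finrank_lt_finrank_of_lt hlt2
      have f3 := Submodule.finrank_le ((LieSubmodule.toSubmodule (C L 2) ⊔
        Submodule.span ℂ {x}) ⊔ Submodule.span ℂ {y})
      rw [hrkS 2 le_rfl (by omega)] at f1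
      rw [hdimL] at f3
      have h4 := Submodule.eq_top_of_finrank_eq
        (S := (LieSubmodule.toSubmodule (C L 2) ⊔ Submodule.span ℂ {x}) ⊔
          Submodule.span ℂ {y}) (by rw [hdimL]; omega)
      rw [sup_assoc] at h4
      exact h4
    have hdec : ∀ a : L, ∃ (c : L) (s t : ℂ), c ∈ C L 2 ∧ a = c + s • x + t • y := by
      intro a
      have ha : a ∈ LieSubmodule.toSubmodule (C L 2) ⊔
          (Submodule.span ℂ {x} ⊔ Submodule.span ℂ {y}) := by
        rw [heqtop]; exact Submodule.mem_top
      obtain ⟨c, hcm, p2, hp2, rfl⟩ := Submodule.mem_sup.mp ha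
      obtain ⟨px, hpx, py, hpy, rfl⟩ := Submodule.mem_sup.mp hp2
      obtain ⟨s, rfl⟩ := Submodule.mem_span_singleton.mp hpx
      obtain ⟨t, rfl⟩ := Submodule.mem_span_singleton.mp hpy
      exact ⟨c, s, t, (LieSubmodule.mem_toSubmodule _).mp hcm, by abel⟩
    refine (hproper 2 le_rfl (by omega)).not_ge ?_
    rw [hC2eq, LieSubmodule.lie_le_iff]
    intro a _ b _
    obtain ⟨c, s, t, hcm, rfl⟩ := hdec a
    obtain ⟨c', s', t', hcm', rfl⟩ := hdec b
    have hyb : ⁅y, c' + s' • x + t' • y⁆ ∈ C L 3 := by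
      rw [lie_add, lie_add, lie_smul, lie_smul, lie_self, smul_zero, add_zero]
      exact add_mem ((hlie23 c' hcm' y).1) (SMulMemClass.smul_mem s' (hwx y))
    have hxb : ⁅x, c' + s' • x + t' • y⁆ ∈ C L 3 := hcon _
    have hcb : ⁅c, c' + s' • x + t' • y⁆ ∈ C L 3 := (hlie23 c hcm _).2
    rw [add_lie, add_lie, smul_lie, smul_lie]
    exact add_mem (add_mem hcb (SMulMemClass.smul_mem s hxb)) (SMulMemClass.smul_mem t hyb)
  -- the chain E m = (ad x)^[m] u
  set F : L → L := fun w => ⁅x, w⁆ with hF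
  set E : ℕ → L := fun m => F^[m] u with hE
  have hEstep : ∀ m, ⁅x, E m⁆ = E (m + 1) := fun m =>
    (Function.iterate_succ_apply' F m u).symm
  have hE0 : E 0 = u := rfl
  have hEchain : ∀ m, 1 ≤ m → m ≤ n - 2 → E m ∈ C L (m + 1) ∧ E m ∉ C L (m + 2) := by
    intro m
    induction m with
    | zero => omega
    | succ m ih =>
      intro _ hm2
      by_cases hm : m = 0
      · subst hm
        have hE1 : E 1 = ⁅x, u⁆ := (hEstep 0).symm
        constructor
        · rw [hE1, hC2eq]
          exact LieSubmodule.lie_mem_lie (LieSubmodule.mem_top x) (LieSubmodule.mem_top u)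
        · rw [hE1]
          exact hu
      · obtain ⟨ih1, ih2⟩ := ih (by omega) (by omega)
        constructor
        · rw [← hEstep m, show m + 1 + 1 = (m + 1) + 1 from rfl,
            Fili.C_succ (by omega : 1 ≤ m + 1)]
          exact LieSubmodule.lie_mem_lie (LieSubmodule.mem_top x) ih1
        · intro hmem
          refine hxB (m + 1) (by omega) (by omega) ((hmemB (m + 1) x).mpr ?_)
          -- decompose C L (m+1)
          have hdecomp : LieSubmodule.toSubmodule (C L (m + 1)) =
              Submodule.span ℂ {E m} ⊔ LieSubmodule.toSubmodule (C L (m + 2)) := by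
            refine Fili.sup_decomp ?_ ?_ ?_ ?_
            · exact (LieSubmodule.toSubmodule_le_toSubmodule _ _).mpr
                (Fili.C_anti (by omega))
            · exact (LieSubmodule.mem_toSubmodule _).mpr ih1
            · intro hx2
              exact ih2 ((LieSubmodule.mem_toSubmodule _).mp hx2)
            · rw [hrkS (m + 1) (by omega) (by omega), hrkS (m + 2) (by omega) (by omega)]
              omega
          intro c hc
          have hc' : c ∈ Submodule.span ℂ {E m} ⊔ LieSubmodule.toSubmodule (C L (m + 2)) := by
            rw [← hdecomp]
            exact (LieSubmodule.mem_toSubmodule _).mpr hc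
          obtain ⟨c1, hc1, c2, hc2, rfl⟩ := Submodule.mem_sup.mp hc'
          obtain ⟨s, rfl⟩ := Submodule.mem_span_singleton.mp hc1
          rw [lie_add, lie_smul, hEstep m]
          refine add_mem (SMulMemClass.smul_mem s ?_) ?_
          · exact hmem
          · have h2 : ⁅x, c2⁆ ∈ C L (m + 2 + 1) := by
              rw [Fili.C_succ (by omega : 1 ≤ m + 2)]
              exact LieSubmodule.lie_mem_lie (LieSubmodule.mem_top x)
                ((LieSubmodule.mem_toSubmodule _).mp hc2)
            rwa [show m + 2 + 1 = m + 1 + 2 from by omega] at h2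
  have hsupKdec : ∀ m, 1 ≤ m → m ≤ n - 2 →
      LieSubmodule.toSubmodule (C L (m + 1)) =
        Submodule.span ℂ {E m} ⊔ LieSubmodule.toSubmodule (C L (m + 2)) := by
    intro m hm1 hm2
    obtain ⟨h1, h2⟩ := hEchain m hm1 hm2
    refine Fili.sup_decomp ?_ ?_ ?_ ?_
    · exact (LieSubmodule.toSubmodule_le_toSubmodule _ _).mpr (Fili.C_anti (by omega))
    · exact (LieSubmodule.mem_toSubmodule _).mpr h1
    · intro hx2
      exact h2 ((LieSubmodule.mem_toSubmodule _).mp hx2)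
    · rw [hrkS (m + 1) (by omega) (by omega), hrkS (m + 2) (by omega) (by omega)]
      omega
  -- spans of the terms of the lower central series
  have hspan : ∀ j, 2 ≤ j → j ≤ n →
      LieSubmodule.toSubmodule (C L j) = Submodule.span ℂ (E '' Set.Icc (j - 1) (n - 2)) := by
    have key : ∀ d j, 2 ≤ j → j ≤ n → n - j = d →
        LieSubmodule.toSubmodule (C L j) =
          Submodule.span ℂ (E '' Set.Icc (j - 1) (n - 2)) := by
      intro d
      induction d with
      | zero =>
        intro j h2 hjn hd
        have hj : j = n := by omega
        have hempty : Set.Icc (n - 1) (n - 2) = (∅ : Set ℕ) := by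
          ext t; simp; omega
        rw [hj, hKbot, hempty, Set.image_empty, Submodule.span_empty,
          LieSubmodule.bot_toSubmodule]
      | succ d ihd =>
        intro j h2 hjn hd
        have hrec := ihd (j + 1) (by omega) (by omega) (by omega)
        have hdec := hsupKdec (j - 1) (by omega) (by omega)
        rw [show j - 1 + 1 = j from by omega, show j - 1 + 2 = j + 1 from by omega] at hdec
        rw [hdec, hrec, show j + 1 - 1 = j from by omega,
          show Set.Icc (j - 1) (n - 2) = insert (j - 1) (Set.Icc j (n - 2)) from by
            ext t; simp; omega,
          Set.image_insert_eq, Submodule.span_insert]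
    intro j h2 hjn
    exact key (n - j) j h2 hjn rfl
  -- membership facts for E
  have hE2mem : E (n - 2) ∈ C L (n - 1) := by
    have h1 := (hEchain (n - 2) (by omega) le_rfl).1
    rwa [show n - 2 + 1 = n - 1 from by omega] at h1
  have hE3mem : E (n - 3) ∈ C L (n - 2) := by
    have h1 := (hEchain (n - 3) (by omega) (by omega)).1
    rwa [show n - 3 + 1 = n - 2 from by omega] at h1
  have hE2ne : E (n - 2) ≠ 0 := by
    intro h0
    exact (hEchain (n - 2) (by omega) le_rfl).2 (by rw [h0]; exact zero_mem _)
  have hcent : ∀ w : L, ⁅w, E (n - 2)⁆ = 0 ∧ ⁅E (n - 2), w⁆ = 0 := by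
    intro w
    have h1 : ⁅w, E (n - 2)⁆ ∈ C L n := by
      rw [show n = n - 1 + 1 from by omega, Fili.C_succ (by omega : 1 ≤ n - 1)]
      exact LieSubmodule.lie_mem_lie (LieSubmodule.mem_top w) hE2mem
    rw [hKbot, LieSubmodule.mem_bot] at h1
    refine ⟨h1, ?_⟩
    rw [← lie_skew, h1, neg_zero]
  -- the coefficient cc
  obtain ⟨cc, hcc⟩ : ∃ cc : ℂ, ⁅E (n - 3), u⁆ = cc • E (n - 2) := by
    have hmem : ⁅E (n - 3), u⁆ ∈ C L (n - 1) := by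
      have h2 := LieSubmodule.lie_mem_lie (LieSubmodule.mem_top u) hE3mem
        (I := (⊤ : LieIdeal ℂ L)) (N := C L (n - 2))
      rw [← Fili.C_succ (by omega : 1 ≤ n - 2),
        show n - 2 + 1 = n - 1 from by omega] at h2
      rw [← lie_skew]
      exact neg_mem h2
    have hmem' : ⁅E (n - 3), u⁆ ∈ Submodule.span ℂ (E '' Set.Icc (n - 1 - 1) (n - 2)) := by
      rw [← hspan (n - 1) (by omega) (by omega)]
      exact (LieSubmodule.mem_toSubmodule _).mpr hmem
    rw [show n - 1 - 1 = n - 2 from by omega, Set.Icc_self, Set.image_singleton] at hmem'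
    obtain ⟨a, ha⟩ := Submodule.mem_span_singleton.mp hmem'
    exact ⟨a, ha.symm⟩
  -- the adapted basis e
  set e : ℕ → L := fun h' => if h' = 1 then x else if h' = n then u + cc • x
    else if 2 ≤ h' ∧ h' ≤ n - 1 then E (n - h') else 0 with he
  have he1 : e 1 = x := by simp [he]
  have hen : e n = u + cc • x := by
    simp only [he]
    rw [if_neg (by omega : ¬ n = 1)]
    simp
  have heI : ∀ h', 2 ≤ h' → h' ≤ n - 1 → e h' = E (n - h') := by
    intro h' h2 hh
    simp only [he]
    rw [if_neg (by omega), if_neg (by omega), if_pos ⟨h2, hh⟩]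
  -- adapted basis bracket conditions
  have hlie1 : ∀ h', 3 ≤ h' → h' ≤ n → ⁅e 1, e h'⁆ = e (h' - 1) := by
    intro h' h3 hhn
    rcases eq_or_lt_of_le hhn with hEq | hlt
    · rw [he1, hEq, hen, lie_add, lie_smul, lie_self, smul_zero, add_zero,
        heI (n - 1) (by omega) le_rfl, show n - (n - 1) = 1 from by omega]
      exact hEstep 0
    · rw [he1, heI h' (by omega) (by omega), heI (h' - 1) (by omega) (by omega),
        show n - (h' - 1) = n - h' + 1 from by omega]
      exact hEstep (n - h')
  have hlie2 : ∀ h', 1 ≤ h' → h' ≤ n → ⁅e 2, e h'⁆ = 0 := by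
    intro h' _ _
    rw [heI 2 le_rfl (by omega)]
    exact (hcent (e h')).2
  have hlie3 : ∀ h', 2 ≤ h' → h' ≤ n → ⁅e 3, e h'⁆ = 0 := by
    intro h' h2 hhn
    rw [heI 3 (by omega) (by omega)]
    rcases eq_or_lt_of_le hhn with hEq | hlt
    · rw [hEq, hen, lie_add, lie_smul, hcc]
      have h9 : ⁅x, E (n - 3)⁆ = E (n - 2) := by
        rw [hEstep (n - 3)]; congr 1; omega
      have h10 : ⁅E (n - 3), x⁆ = -E (n - 2) := by rw [← lie_skew, h9]
      rw [h10]
      simp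
    · rw [heI h' h2 (by omega)]
      have hmem2 : E (n - h') ∈ C L 2 := by
        have h1 := (hEchain (n - h') (by omega) (by omega)).1
        exact Fili.C_anti (by omega) h1
      have hmem3 : ⁅E (n - 3), E (n - h')⁆ ∈ C L n := by
        have h4 := LieSubmodule.lie_mem_lie hE3mem hmem2 (I := C L (n - 2)) (N := C L 2)
        have h5 := Fili.C_lie (L := L) (a := n - 2) (b := 2) (by omega) (by omega) h4
        rwa [show n - 2 + 2 = n from by omega] at h5
      rwa [hKbot, LieSubmodule.mem_bot] at hmem3
  -- e gives a basis
  have hentop : u + cc • x ∉ LieSubmodule.toSubmodule (C L 2) ⊔ Submodule.span ℂ {x} := by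
    intro hmem
    have hxmem : cc • x ∈ LieSubmodule.toSubmodule (C L 2) ⊔ Submodule.span ℂ {x} :=
      Submodule.mem_sup_right (Submodule.smul_mem _ cc (Submodule.mem_span_singleton_self x))
    have humem : u ∈ LieSubmodule.toSubmodule (C L 2) ⊔ Submodule.span ℂ {x} := by
      have := sub_mem hmem hxmem
      simpa using this
    obtain ⟨w, hw, p2, hp2, hdecu⟩ := Submodule.mem_sup.mp humem
    obtain ⟨s, rfl⟩ := Submodule.mem_span_singleton.mp hp2
    apply hu
    have hxw : ⁅x, w⁆ ∈ C L 3 :=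
      (hlie23 w ((LieSubmodule.mem_toSubmodule _).mp hw) x).1
    rw [← hdecu, lie_add, lie_smul, lie_self, smul_zero, add_zero]
    exact hxw
  have heqtop2 : (LieSubmodule.toSubmodule (C L 2) ⊔ Submodule.span ℂ {x}) ⊔
      Submodule.span ℂ {u + cc • x} = ⊤ := by
    have hlt1 : LieSubmodule.toSubmodule (C L 2) <
        LieSubmodule.toSubmodule (C L 2) ⊔ Submodule.span ℂ {x} := by
      refine lt_of_le_of_ne le_sup_left fun hEq => hxC2 ?_
      rw [hEq]
      exact Submodule.mem_sup_right (Submodule.mem_span_singleton_self x)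
    have hlt2 : LieSubmodule.toSubmodule (C L 2) ⊔ Submodule.span ℂ {x} <
        (LieSubmodule.toSubmodule (C L 2) ⊔ Submodule.span ℂ {x}) ⊔
          Submodule.span ℂ {u + cc • x} := by
      refine lt_of_le_of_ne le_sup_left fun hEq => hentop ?_
      rw [hEq]
      exact Submodule.mem_sup_right (Submodule.mem_span_singleton_self _)
    have f1 := Submodule.finrank_lt_finrank_of_lt hlt1
    have f2 := Submodule.finrank_lt_finrank_of_lt hlt2
    have f3 := Submodule.finrank_le ((LieSubmodule.toSubmodule (C L 2) ⊔
      Submodule.span ℂ {x}) ⊔ Submodule.span ℂ {u + cc • x})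
    rw [hrkS 2 le_rfl (by omega)] at f1
    rw [hdimL] at f3
    exact Submodule.eq_top_of_finrank_eq (by rw [hdimL]; omega)
  have hbase : ∃ b : Basis (Fin n) ℂ L, ∀ i : Fin n, b i = e (i.1 + 1) := by
    set v : Fin n → L := fun i => e (i.1 + 1) with hv
    have htople : ⊤ ≤ Submodule.span ℂ (Set.range v) := by
      rw [← heqtop2]
      refine sup_le (sup_le ?_ ?_) ?_
      · rw [hspan 2 le_rfl (by omega)]
        rw [Submodule.span_le]
        rintro _ ⟨m, hm, rfl⟩
        simp only [Set.mem_Icc] at hm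
        have hval : v ⟨n - m - 1, by omega⟩ = E m := by
          show e (n - m - 1 + 1) = E m
          rw [show n - m - 1 + 1 = n - m from by omega,
            heI (n - m) (by omega) (by omega), show n - (n - m) = m from by omega]
        apply Submodule.subset_span
        exact ⟨⟨n - m - 1, by omega⟩, hval⟩
      · rw [Submodule.span_le, Set.singleton_subset_iff]
        apply Submodule.subset_span
        exact ⟨⟨0, by omega⟩, he1⟩
      · rw [Submodule.span_le, Set.singleton_subset_iff]
        apply Submodule.subset_span
        refine ⟨⟨n - 1, by omega⟩, ?_⟩
        show e (n - 1 + 1) = u + cc • x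
        rw [show n - 1 + 1 = n from by omega, hen]
    have hcard : Fintype.card (Fin n) = finrank ℂ L := by simp [hdimL]
    exact ⟨basisOfTopLeSpanOfCardEqFinrank v htople hcard, fun i => by
      rw [coe_basisOfTopLeSpanOfCardEqFinrank]⟩
  have hadapt : IsAdaptedBasis L n e := ⟨hbase, hlie1, hlie2, hlie3⟩
  obtain ⟨hz1, hz2⟩ := htrip e hadapt
  -- bracket tables
  have tB : ∀ d i j, 2 ≤ i → i < j → j ≤ n - 2 → j - i = d → ⁅e i, e j⁆ = 0 := by
    intro d
    induction d using Nat.strong_induction_on with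
    | _ d IH =>
      intro i j h2 hij hj hd
      rcases Nat.lt_or_ge d 2 with hd2 | hd2
      · have hd1 : j = i + 1 := by omega
        subst hd1
        rcases Nat.lt_or_ge i 4 with hi4 | hi4
        · interval_cases i
          · exact hlie2 3 (by omega) (by omega)
          · exact hlie3 4 (by omega) (by omega)
        · by_contra hne
          have := hz2.2 ⟨hi4, hne⟩
          omega
      · have k1 : ⁅e 1, e (i + 1)⁆ = e i := by
          have := hlie1 (i + 1) (by omega) (by omega)
          rwa [show i + 1 - 1 = i from rfl] at this
        have k2 : ⁅e 1, e j⁆ = e (j - 1) := hlie1 j (by omega) (by omega)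
        have k3 : ⁅e (i + 1), e j⁆ = 0 :=
          IH (d - 1) (by omega) (i + 1) j (by omega) (by omega) hj (by omega)
        have k4 : ⁅e (i + 1), e (j - 1)⁆ = 0 := by
          rcases Nat.eq_or_lt_of_le (show i + 1 ≤ j - 1 from by omega) with hEq | hlt
          · rw [hEq]; exact lie_self _
          · exact IH (d - 2) (by omega) (i + 1) (j - 1) (by omega) hlt (by omega) (by omega)
        have k5 := leibniz_lie (e 1) (e (i + 1)) (e j)
        rw [k3, lie_zero, k1, k2, k4, add_zero] at k5
        exact k5.symm
  have tC : ∀ j, 2 ≤ j → j ≤ n - 3 → ⁅e j, e n⁆ = 0 := by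
    intro j h2 hj
    rcases Nat.lt_or_ge j 4 with h4 | h4
    · interval_cases j
      · exact hlie2 n (by omega) le_rfl
      · exact hlie3 n (by omega) le_rfl
    · by_contra hne
      have := hz1.2 ⟨h4, hne⟩
      omega
  have tD : ∀ j, 2 ≤ j → j ≤ n - 3 → ⁅e j, e (n - 1)⁆ = 0 := by
    intro j h2 hj
    by_cases hj2 : j = 2
    · subst hj2; exact hlie2 (n - 1) (by omega) (by omega)
    · have k1 : ⁅e 1, e j⁆ = e (j - 1) := hlie1 j (by omega) (by omega)
      have k2 : ⁅e 1, e n⁆ = e (n - 1) := hlie1 n (by omega) le_rfl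
      have k3 : ⁅e j, e n⁆ = 0 := tC j (by omega) hj
      have k4 : ⁅e (j - 1), e n⁆ = 0 := tC (j - 1) (by omega) (by omega)
      have k5 := leibniz_lie (e 1) (e j) (e n)
      rw [k3, lie_zero, k1, k2, k4, zero_add] at k5
      exact k5.symm
  -- the bracket ⁅e (n-2), e (n-1)⁆ is α • e 2 with α ≠ 0
  have fbrmem : ⁅e (n - 2), e (n - 1)⁆ ∈ C L 2 := by
    rw [hC2eq]
    exact LieSubmodule.lie_mem_lie (LieSubmodule.mem_top _) (LieSubmodule.mem_top _)
  have kill : ⁅e 1, ⁅e (n - 2), e (n - 1)⁆⁆ = 0 := by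
    have k1 : ⁅e 1, e (n - 2)⁆ = e (n - 3) := by
      have := hlie1 (n - 2) (by omega) (by omega)
      rwa [show n - 2 - 1 = n - 3 from by omega] at this
    have k2 : ⁅e 1, e (n - 1)⁆ = e (n - 2) := by
      have := hlie1 (n - 1) (by omega) (by omega)
      rwa [show n - 1 - 1 = n - 2 from by omega] at this
    have k3 : ⁅e (n - 3), e (n - 1)⁆ = 0 := tD (n - 3) (by omega) le_rfl
    rw [leibniz_lie, k1, k2, k3, lie_self, add_zero]
  -- kernel lemma
  have kerlem : ∀ s : ℕ, s ≤ n - 3 →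
      ∀ w, w ∈ Submodule.span ℂ (E '' Set.Icc (n - 2 - s) (n - 2)) →
      ⁅x, w⁆ = 0 → w ∈ Submodule.span ℂ {E (n - 2)} := by
    intro s
    induction s with
    | zero =>
      intro _ w hw _
      rwa [Nat.sub_zero, Set.Icc_self, Set.image_singleton] at hw
    | succ s ih =>
      intro hs w hw hxw
      set a := n - 2 - (s + 1) with ha
      have hins : Set.Icc (n - 2 - (s + 1)) (n - 2) = insert a (Set.Icc (a + 1) (n - 2)) := by
        ext t; simp only [Set.mem_Icc, Set.mem_insert_iff]; omega
      rw [hins, Set.image_insert_eq] at hw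
      obtain ⟨t, z, hz, hwdec⟩ := Submodule.mem_span_insert.mp hw
      have hmapz : ⁅x, z⁆ ∈ LieSubmodule.toSubmodule (C L (a + 3)) := by
        have h1 : (LieModule.toEnd ℂ L L x) z ∈
            Submodule.map (LieModule.toEnd ℂ L L x)
              (Submodule.span ℂ (E '' Set.Icc (a + 1) (n - 2))) :=
          Submodule.mem_map_of_mem hz
        rw [Submodule.map_span] at h1
        have h2 : Submodule.span ℂ ((LieModule.toEnd ℂ L L x) '' (E '' Set.Icc (a + 1) (n - 2))) ≤
            LieSubmodule.toSubmodule (C L (a + 3)) := by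
          rw [Submodule.span_le]
          rintro _ ⟨_, ⟨m, hm, rfl⟩, rfl⟩
          simp only [Set.mem_Icc] at hm
          have hEm1 : (LieModule.toEnd ℂ L L x) (E m) = E (m + 1) := hEstep m
          rw [SetLike.mem_coe, hEm1]
          rcases Nat.lt_or_ge m (n - 2) with hmlt | hmge
          · have h5 := (hEchain (m + 1) (by omega) (by omega)).1
            exact (LieSubmodule.mem_toSubmodule _).mpr (Fili.C_anti (by omega) h5)
          · have hm2 : m = n - 2 := by omega
            have h6 : E (m + 1) = 0 := by
              rw [hm2, ← hEstep (n - 2)]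
              exact (hcent x).1
            rw [h6]
            exact zero_mem _
        exact h2 h1
      have htz : t • E (a + 1) = -⁅x, z⁆ := by
        have h7 : ⁅x, w⁆ = t • ⁅x, E a⁆ + ⁅x, z⁆ := by rw [hwdec, lie_add, lie_smul]
        rw [hxw, hEstep a] at h7
        exact eq_neg_of_add_eq_zero_left h7.symm
      have ht0 : t = 0 := by
        by_contra ht
        have h7 : t • E (a + 1) ∈ LieSubmodule.toSubmodule (C L (a + 3)) := by
          rw [htz]; exact neg_mem hmapz
        have h8 := Submodule.smul_mem _ t⁻¹ h7
        rw [smul_smul, inv_mul_cancel₀ ht, one_smul] at h8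
        exact (hEchain (a + 1) (by omega) (by omega)).2
          ((LieSubmodule.mem_toSubmodule _).mp h8)
      rw [hwdec, ht0, zero_smul, zero_add]
      rw [hwdec, ht0, zero_smul, zero_add] at hxw
      refine ih (by omega) z ?_ hxw
      rwa [show n - 2 - s = a + 1 from by omega]
  have he2E : e 2 = E (n - 2) := by
    rw [heI 2 le_rfl (by omega)]
  have he2ne : e 2 ≠ 0 := by rw [he2E]; exact hE2ne
  obtain ⟨α, hα, hαne⟩ : ∃ α : ℂ, ⁅e (n - 2), e (n - 1)⁆ = α • e 2 ∧ α ≠ 0 := by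
    have hmemspan : ⁅e (n - 2), e (n - 1)⁆ ∈
        Submodule.span ℂ (E '' Set.Icc (n - 2 - (n - 3)) (n - 2)) := by
      rw [show n - 2 - (n - 3) = 1 from by omega,
        show (1 : ℕ) = 2 - 1 from rfl, ← hspan 2 le_rfl (by omega)]
      exact (LieSubmodule.mem_toSubmodule _).mpr fbrmem
    have hx1 : ⁅x, ⁅e (n - 2), e (n - 1)⁆⁆ = 0 := by rw [← he1]; exact kill
    have hker := kerlem (n - 3) le_rfl _ hmemspan hx1
    obtain ⟨α, hα⟩ := Submodule.mem_span_singleton.mp hker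
    refine ⟨α, by rw [he2E, ← hα], ?_⟩
    intro h0
    have hne := hz2.1.2
    rw [show n - 2 + 1 = n - 1 from by omega] at hne
    exact hne (by rw [← hα, h0, zero_smul])
  -- E-version of the basis brackets, and the table
  have hEe : ∀ m, 1 ≤ m → m ≤ n - 2 → E m = e (n - m) := by
    intro m h1 h2
    rw [heI (n - m) (by omega) (by omega), show n - (n - m) = m from by omega]
  have hbr21 : ⁅E 2, E 1⁆ = α • e 2 := by
    rw [hEe 2 (by omega) (by omega), hEe 1 (by omega) (by omega)]
    exact hα
  have tab0 : ∀ p q, 1 ≤ p → p ≤ n - 2 → 1 ≤ q → q ≤ n - 2 →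
      ¬(p = 2 ∧ q = 1) → ¬(p = 1 ∧ q = 2) → ⁅E p, E q⁆ = 0 := by
    intro p q hp1 hp2 hq1 hq2 hpq1 hpq2
    rcases Nat.lt_trichotomy p q with hlt | hEq | hgt
    · have h0 : ⁅E q, E p⁆ = 0 := by
        rcases Nat.eq_or_lt_of_le hp1 with h1 | h1
        · have hq3 : 3 ≤ q := by omega
          rw [hEe q (by omega) hq2, ← h1, hEe 1 (by omega) (by omega)]
          exact tD (n - q) (by omega) (by omega)
        · rw [hEe q (by omega) hq2, hEe p (by omega) hp2]
          exact tB ((n - p) - (n - q)) (n - q) (n - p) (by omega) (by omega) (by omega) rfl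
      rw [← lie_skew, h0, neg_zero]
    · rw [hEq]; exact lie_self _
    · rcases Nat.eq_or_lt_of_le hq1 with h1 | h1
      · have hp3 : 3 ≤ p := by omega
        rw [hEe p (by omega) hp2, ← h1, hEe 1 (by omega) (by omega)]
        exact tD (n - p) (by omega) (by omega)
      · rw [hEe p (by omega) hp2, hEe q (by omega) hq2]
        exact tB ((n - q) - (n - p)) (n - p) (n - q) (by omega) (by omega) (by omega) rfl
  -- the target ideal N = span of e 2
  have hcent2 : ∀ (y m : L), m ∈ Submodule.span ℂ {e 2} → ⁅y, m⁆ = 0 := by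
    intro y m hm
    obtain ⟨t, ht⟩ := Submodule.mem_span_singleton.mp hm
    rw [← ht, lie_smul, he2E, (hcent y).1, smul_zero]
  set N : LieIdeal ℂ L :=
    { toSubmodule := Submodule.span ℂ {e 2}
      lie_mem := fun {y} {m} hm => by
        have h0 := hcent2 y m hm
        show ⁅y, m⁆ ∈ Submodule.span ℂ {e 2}
        rw [h0]
        exact zero_mem _ } with hN
  have hmemN : ∀ m : L, m ∈ N ↔ m ∈ Submodule.span ℂ {e 2} := fun m => Iff.rfl
  have hNsmul : ∀ t : ℂ, t • e 2 ∈ N := fun t =>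
    Submodule.smul_mem _ t (Submodule.mem_span_singleton_self _)
  have hrankN : finrank ℂ N = 1 := finrank_span_singleton he2ne
  -- master inclusion lemma
  have hidle : ∀ (k l : ℕ) (M : LieIdeal ℂ L), 2 ≤ k → k ≤ n → 2 ≤ l → l ≤ n →
      (∀ p q, p ∈ Set.Icc (k - 1) (n - 2) → q ∈ Set.Icc (l - 1) (n - 2) → ⁅E p, E q⁆ ∈ M) →
      ⁅C L k, C L l⁆ ≤ M := by
    intro k l M hk2 hkn hl2 hln hgen
    rw [LieSubmodule.lie_le_iff]
    intro a ha b hb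
    have ha' : a ∈ Submodule.span ℂ (E '' Set.Icc (k - 1) (n - 2)) := by
      rw [← hspan k hk2 hkn]; exact (LieSubmodule.mem_toSubmodule _).mpr ha
    have hb' : b ∈ Submodule.span ℂ (E '' Set.Icc (l - 1) (n - 2)) := by
      rw [← hspan l hl2 hln]; exact (LieSubmodule.mem_toSubmodule _).mpr hb
    clear ha hb
    induction ha' using Submodule.span_induction with
    | mem a hamem =>
      obtain ⟨p, hp, rfl⟩ := hamem
      induction hb' using Submodule.span_induction with
      | mem b hbmem =>
        obtain ⟨q, hq, rfl⟩ := hbmem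
        exact hgen p q hp hq
      | zero => rw [lie_zero]; exact zero_mem _
      | add b1 b2 _ _ hh1 hh2 => rw [lie_add]; exact add_mem hh1 hh2
      | smul t b _ hh => rw [lie_smul]; exact SMulMemClass.smul_mem t hh
    | zero => rw [zero_lie]; exact zero_mem _
    | add a1 a2 _ _ hh1 hh2 => rw [add_lie]; exact add_mem hh1 hh2
    | smul t a _ hh => rw [smul_lie]; exact SMulMemClass.smul_mem t hh
  have hNle : ∀ (k l : ℕ), e 2 ∈ ⁅C L k, C L l⁆ → N ≤ ⁅C L k, C L l⁆ := by
    intro k l hmem m hm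
    have hm' : m ∈ Submodule.span ℂ {e 2} := hm
    obtain ⟨t, ht⟩ := Submodule.mem_span_singleton.mp hm'
    rw [← ht]
    exact SMulMemClass.smul_mem t hmem
  have hE1mem : E 1 ∈ C L 2 := by
    have := (hEchain 1 (by omega) (by omega)).1
    exact this
  have hE2memC3 : E 2 ∈ C L 3 := (hEchain 2 (by omega) (by omega)).1
  have he2in22 : e 2 ∈ ⁅C L 2, C L 2⁆ := by
    have h1 : ⁅E 2, E 1⁆ ∈ ⁅C L 2, C L 2⁆ :=
      LieSubmodule.lie_mem_lie (Fili.C_anti (by omega) hE2memC3) hE1mem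
    rw [hbr21] at h1
    have h2 := SMulMemClass.smul_mem α⁻¹ h1
    rwa [smul_smul, inv_mul_cancel₀ hαne, one_smul] at h2
  have hbr12 : ⁅E 1, E 2⁆ = (-α) • e 2 := by
    rw [← lie_skew, hbr21, neg_smul]
  have he2in23 : e 2 ∈ ⁅C L 2, C L 3⁆ := by
    have h1 : ⁅E 1, E 2⁆ ∈ ⁅C L 2, C L 3⁆ :=
      LieSubmodule.lie_mem_lie hE1mem hE2memC3
    rw [hbr12] at h1
    have h2 := SMulMemClass.smul_mem (-α)⁻¹ h1
    rwa [smul_smul, inv_mul_cancel₀ (neg_ne_zero.mpr hαne), one_smul] at h2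
  have he2in32 : e 2 ∈ ⁅C L 3, C L 2⁆ := by
    have h1 : ⁅E 2, E 1⁆ ∈ ⁅C L 3, C L 2⁆ :=
      LieSubmodule.lie_mem_lie hE2memC3 hE1mem
    rw [hbr21] at h1
    have h2 := SMulMemClass.smul_mem α⁻¹ h1
    rwa [smul_smul, inv_mul_cancel₀ hαne, one_smul] at h2
  -- the three ideals equal to N
  have h22 : ⁅C L 2, C L 2⁆ = N := by
    refine le_antisymm (hidle 2 2 N le_rfl (by omega) le_rfl (by omega) ?_) (hNle 2 2 he2in22)
    intro p q hp hq
    simp only [Set.mem_Icc] at hp hq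
    by_cases hc1 : p = 2 ∧ q = 1
    · rw [hc1.1, hc1.2, hbr21]; exact hNsmul α
    · by_cases hc2 : p = 1 ∧ q = 2
      · rw [hc2.1, hc2.2, hbr12]; exact hNsmul (-α)
      · rw [tab0 p q (by omega) hp.2 (by omega) hq.2 hc1 hc2]; exact zero_mem _
  have h23 : ⁅C L 2, C L 3⁆ = N := by
    refine le_antisymm (hidle 2 3 N le_rfl (by omega) (by omega) (by omega) ?_) (hNle 2 3 he2in23)
    intro p q hp hq
    simp only [Set.mem_Icc] at hp hq
    by_cases hc2 : p = 1 ∧ q = 2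
    · rw [hc2.1, hc2.2, hbr12]; exact hNsmul (-α)
    · rw [tab0 p q (by omega) hp.2 (by omega) hq.2 (by omega) hc2]; exact zero_mem _
  have h32 : ⁅C L 3, C L 2⁆ = N := by
    refine le_antisymm (hidle 3 2 N (by omega) (by omega) le_rfl (by omega) ?_) (hNle 3 2 he2in32)
    intro p q hp hq
    simp only [Set.mem_Icc] at hp hq
    by_cases hc1 : p = 2 ∧ q = 1
    · rw [hc1.1, hc1.2, hbr21]; exact hNsmul α
    · rw [tab0 p q (by omega) hp.2 (by omega) hq.2 hc1 (by omega)]; exact zero_mem _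
  -- the vanishing ideals
  have h24 : ⁅C L 2, C L 4⁆ = ⊥ := by
    refine le_bot_iff.mp (hidle 2 4 ⊥ le_rfl (by omega) (by omega) (by omega) ?_)
    intro p q hp hq
    simp only [Set.mem_Icc] at hp hq
    rw [tab0 p q (by omega) hp.2 (by omega) hq.2 (by omega) (by omega)]
    exact zero_mem _
  have h33 : ⁅C L 3, C L 3⁆ = ⊥ := by
    refine le_bot_iff.mp (hidle 3 3 ⊥ (by omega) (by omega) (by omega) (by omega) ?_)
    intro p q hp hq
    simp only [Set.mem_Icc] at hp hq
    rw [tab0 p q (by omega) hp.2 (by omega) hq.2 (by omega) (by omega)]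
    exact zero_mem _
  refine ⟨by rw [h22]; exact hrankN, by rw [h23]; exact hrankN, by rw [h32]; exact hrankN, ?_⟩
  intro k l hk hl hno1 hno2 hno3
  by_cases h4l : 4 ≤ l
  · refine le_bot_iff.mp (le_trans (LieSubmodule.mono_lie (Fili.C_anti hk) (Fili.C_anti h4l)) ?_)
    rw [h24]
  · by_cases h4k : 4 ≤ k
    · refine le_bot_iff.mp (le_trans (LieSubmodule.mono_lie (Fili.C_anti h4k) (Fili.C_anti hl)) ?_)
      rw [LieSubmodule.lie_comm, h24]
    · have h33' : k = 3 ∧ l = 3 := by omega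
      rw [h33'.1, h33'.2, h33]
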